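/- Fix x ∈ M and write μ_n = E_n(x) for the empiric probabilities. Suppose there exist two strictly increasing sequences of indices (m_j) and (n_j) such that μ_{m_j} → μ and μ_{n_j} → ν in the weak* topology. Then for every λ ∈ [0,1], every ε > 0 and every K > 0 there exists a natural number h > K such that |dist(μ_h, μ) − λ · dist(ν, μ)| ≤ ε, where dist is the Lévy–Prokhorov metric on P. -/

import Mathlib

open MeasureTheory Filter Topology ENNReal NNReal

variable {M : Type*} [MetricSpace M] [CompactSpace M] [MeasurableSpace M] [BorelSpace M]

/-- The empiric probability `E_{n+1}(x) = (1/(n+1)) ∑_{j=0}^{n} δ_{f^j(x)}`.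
(The indexing is shifted: `empiric f x n` is the `(n+1)`-st empiric probability `E_{n+1}(x)`,
so that `(empiric f x n)_{n ≥ 0}` is exactly the sequence `(E_n(x))_{n ≥ 1}`.) -/
noncomputable def empiric (f : M → M) (x : M) (n : ℕ) : ProbabilityMeasure M :=
  ⟨((n : ℝ≥0∞) + 1)⁻¹ • ∑ j ∈ Finset.range (n + 1), MeasureTheory.Measure.dirac (f^[j] x), by
    constructor
    rw [Measure.smul_apply, Measure.finset_sum_apply]
    simp only [Measure.dirac_apply_of_mem (Set.mem_univ _), Finset.sum_const,
      Finset.card_range, nsmul_eq_mul, mul_one, smul_eq_mul]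
    rw [Nat.cast_add, Nat.cast_one]
    exact ENNReal.inv_mul_cancel (by simp) (by simp)⟩

/-- The limit set `pω(x)`: all weak* limits of convergent subsequences of the sequence
of empiric probabilities `(E_n(x))_{n ≥ 1}`. -/
def pomega (f : M → M) (x : M) : Set (ProbabilityMeasure M) :=
  {μ | ∃ φ : ℕ → ℕ, StrictMono φ ∧ Tendsto (fun k => empiric f x (φ k)) atTop (𝓝 μ)}

/-- The Lévy–Prokhorov distance between two Borel probability measures. -/
noncomputable def probDist (μ ν : ProbabilityMeasure M) : ℝ :=
  levyProkhorovDist (μ : Measure M) (ν : Measure M)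

/-- The basin of `ε`-attraction of `μ`:
`A_ε(μ) = {x ∈ M : inf_{ν ∈ pω(x)} dist(ν, μ) < ε}`. -/
def basinEps (f : M → M) (μ : ProbabilityMeasure M) (ε : ℝ) : Set M :=
  {x | (⨅ ν ∈ pomega f x, probDist ν μ) < ε}

/-- `μ` is observable (SRB-like): for every `ε > 0`, the basin of `ε`-attraction of `μ`
has positive `m`-measure. -/
def Observable (f : M → M) (m : Measure M) (μ : ProbabilityMeasure M) : Prop :=
  ∀ ε : ℝ, 0 < ε → 0 < m (basinEps f μ ε)

/-- The basin of attraction `A(μ) = {x ∈ M : pω(x) = {μ}}`. -/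
def basin (f : M → M) (μ : ProbabilityMeasure M) : Set M :=
  {x | pomega f x = {μ}}

/-- `μ` is an SRB (physical) measure: its basin of attraction has positive `m`-measure. -/
def IsSRB (f : M → M) (m : Measure M) (μ : ProbabilityMeasure M) : Prop :=
  0 < m (basin f μ)


set_option linter.unusedSectionVars false

lemma empiric_apply' (f : M → M) (x : M) (n : ℕ) (B : Set M) :
    (empiric f x n : Measure M) B
      = ((n : ℝ≥0∞) + 1)⁻¹ * ∑ j ∈ Finset.range (n + 1), Measure.dirac (f^[j] x) B := by
  show (((n : ℝ≥0∞) + 1)⁻¹ • ∑ j ∈ Finset.range (n + 1), Measure.dirac (f^[j] x)) B = _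
  rw [Measure.smul_apply, Measure.finset_sum_apply, smul_eq_mul]

lemma empiric_succ_dist (f : M → M) (x : M) (n : ℕ) :
    probDist (empiric f x (n + 1)) (empiric f x n) ≤ 1 / (n + 2) := by
  unfold probDist
  apply levyProkhorovDist_le_of_forall_le _ _ (by positivity)
  intro ε B hε hB
  have hε0 : (0:ℝ) < ε := lt_of_le_of_lt (by positivity) hε
  refine le_trans ?_ (add_le_add
    (measure_mono (Metric.self_subset_thickening hε0 B)) le_rfl)
  have key : (empiric f x (n+1) : Measure M) B
      ≤ (empiric f x n : Measure M) B + ((n : ℝ≥0∞) + 2)⁻¹ := by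
    rw [empiric_apply', empiric_apply', Finset.sum_range_succ]
    push_cast
    have h1 : ((n : ℝ≥0∞) + 1 + 1)⁻¹ * (∑ j ∈ Finset.range (n + 1), Measure.dirac (f^[j] x) B
        + Measure.dirac (f^[n+1] x) B)
        ≤ ((n : ℝ≥0∞) + 1 + 1)⁻¹ * (∑ j ∈ Finset.range (n + 1), Measure.dirac (f^[j] x) B + 1) :=
      mul_le_mul' le_rfl (add_le_add le_rfl prob_le_one)
    refine h1.trans ?_
    rw [mul_add, mul_one]
    have h2 : ((n : ℝ≥0∞) + 1 + 1)⁻¹ ≤ ((n : ℝ≥0∞) + 1)⁻¹ :=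
      ENNReal.inv_le_inv' (by exact le_self_add)
    have h3 : ((n : ℝ≥0∞) + 1 + 1) = ((n : ℝ≥0∞) + 2) := by ring
    rw [h3]
    exact add_le_add (mul_le_mul' (h3 ▸ h2) le_rfl) le_rfl
  refine key.trans (add_le_add le_rfl ?_)
  have heq : ((n : ℝ≥0∞) + 2)⁻¹ = ENNReal.ofReal (1 / (n + 2)) := by
    rw [ENNReal.ofReal_div_of_pos (by positivity), ENNReal.ofReal_one]
    rw [ENNReal.ofReal_add (by positivity) (by norm_num)]
    simp
  rw [heq]
  exact ENNReal.ofReal_le_ofReal hε.le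

lemma probDist_triangle (μ ν κ : ProbabilityMeasure M) :
    probDist μ κ ≤ probDist μ ν + probDist ν κ :=
  levyProkhorovDist_triangle _ _ _

lemma probDist_comm (μ ν : ProbabilityMeasure M) : probDist μ ν = probDist ν μ :=
  levyProkhorovDist_comm _ _

lemma probDist_nonneg (μ ν : ProbabilityMeasure M) : 0 ≤ probDist μ ν :=
  ENNReal.toReal_nonneg

lemma abs_probDist_sub_le (μ₁ μ₂ κ : ProbabilityMeasure M) :
    |probDist μ₁ κ - probDist μ₂ κ| ≤ probDist μ₁ μ₂ := by
  rw [abs_sub_le_iff]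
  constructor
  · have := probDist_triangle μ₁ μ₂ κ; linarith
  · have := probDist_triangle μ₂ μ₁ κ; rw [probDist_comm μ₂ μ₁] at this; linarith

lemma tendsto_probDist {φ : ℕ → ProbabilityMeasure M} {μ ν : ProbabilityMeasure M}
    (h : Tendsto φ atTop (𝓝 ν)) :
    Tendsto (fun j => probDist (φ j) μ) atTop (𝓝 (probDist ν μ)) := by
  let H := MeasureTheory.LevyProkhorov.probabilityMeasureHomeomorph (Ω := M)
  have hH : Tendsto (fun j => H (φ j)) atTop (𝓝 (H ν)) := (H.continuous.tendsto ν).comp h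
  have := hH.dist (tendsto_const_nhds (x := H μ) (f := atTop))
  exact this

lemma discrete_ivt (a : ℕ → ℝ) (t ε : ℝ) (m n : ℕ) (hmn : m ≤ n)
    (ham : a m ≤ t + ε) (han : t - ε ≤ a n)
    (hstep : ∀ i, m ≤ i → |a (i + 1) - a i| ≤ ε) :
    ∃ h, m ≤ h ∧ |a h - t| ≤ ε := by
  by_cases hm : t - ε ≤ a m
  · exact ⟨m, le_rfl, abs_le.mpr ⟨by linarith, by linarith⟩⟩
  push_neg at hm
  have hex : ∃ k, t - ε ≤ a (m + k) := ⟨n - m, by rwa [Nat.add_sub_cancel' hmn]⟩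
  classical
  have hk : t - ε ≤ a (m + Nat.find hex) := Nat.find_spec hex
  have hkpos : 0 < Nat.find hex := by
    rcases Nat.eq_zero_or_pos (Nat.find hex) with h0 | h
    · rw [h0, add_zero] at hk; linarith
    · exact h
  have hprev : a (m + (Nat.find hex - 1)) < t - ε := by
    have := Nat.find_min hex (Nat.sub_lt hkpos one_pos)
    linarith [not_le.mp this]
  have hstep' := hstep (m + (Nat.find hex - 1)) (Nat.le_add_right _ _)
  have heq : m + (Nat.find hex - 1) + 1 = m + Nat.find hex := by omega
  rw [heq] at hstep'
  have h1 := (abs_le.mp hstep').2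
  exact ⟨m + Nat.find hex, Nat.le_add_right _ _, abs_le.mpr ⟨by linarith, by linarith⟩⟩

/-- If two subsequences of the empiric probabilities of `x` converge to `μ` and `ν`
respectively, then for every `λ ∈ [0,1]`, every `ε > 0` and every `K`, there exists
`h > K` with `|dist(μ_h, μ) − λ · dist(ν, μ)| ≤ ε`. -/
theorem empiric_intermediate_distance (f : M → M) (hf : Continuous f) (x : M)
    (μ ν : ProbabilityMeasure M) (mj nj : ℕ → ℕ) (hmj : StrictMono mj) (hnj : StrictMono nj)
    (hμ : Tendsto (fun j => empiric f x (mj j)) atTop (𝓝 μ))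
    (hν : Tendsto (fun j => empiric f x (nj j)) atTop (𝓝 ν))
    (lam : ℝ) (hlam : lam ∈ Set.Icc (0 : ℝ) 1) (ε : ℝ) (hε : 0 < ε) (K : ℕ) :
    ∃ h : ℕ, K < h ∧ |probDist (empiric f x h) μ - lam * probDist ν μ| ≤ ε := by
  classical
  set a : ℕ → ℝ := fun n => probDist (empiric f x n) μ with ha
  set c : ℝ := probDist ν μ with hc
  have hc0 : (0:ℝ) ≤ c := probDist_nonneg _ _
  set t : ℝ := lam * c with htdef
  have ht0 : 0 ≤ t := mul_nonneg hlam.1 hc0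
  have htc : t ≤ c := by nlinarith [hlam.2]
  have h1 : Tendsto (fun j => a (mj j)) atTop (𝓝 0) := by
    have := tendsto_probDist (μ := μ) hμ
    simpa [ha, probDist, levyProkhorovDist_self] using this
  have h2 : Tendsto (fun j => a (nj j)) atTop (𝓝 c) := tendsto_probDist hν
  obtain ⟨N₀, hN₀⟩ : ∃ N₀ : ℕ, ∀ i : ℕ, N₀ ≤ i → (1:ℝ) / (i + 2) ≤ ε := by
    obtain ⟨N, hN⟩ := exists_nat_gt (1 / ε)
    refine ⟨N, fun i hi => ?_⟩
    have hi2 : (1:ℝ) / ε < (i:ℝ) + 2 := by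
      have : (N:ℝ) ≤ i := Nat.cast_le.mpr hi
      linarith
    rw [div_le_iff₀ (by positivity)]
    have := (div_lt_iff₀ hε).mp hi2
    linarith
  have hstep : ∀ i : ℕ, N₀ ≤ i → |a (i + 1) - a i| ≤ ε := by
    intro i hi
    have := (abs_probDist_sub_le (empiric f x (i+1)) (empiric f x i) μ).trans
      ((empiric_succ_dist f x i).trans (hN₀ i hi))
    simpa [ha] using this
  -- find m
  have hmjtop := hmj.tendsto_atTop
  have hnjtop := hnj.tendsto_atTop
  have ev1 : ∀ᶠ j in atTop, a (mj j) < ε := h1.eventually (gt_mem_nhds hε)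
  have ev2 : ∀ᶠ j in atTop, max (K + 1) N₀ ≤ mj j := hmjtop.eventually_ge_atTop _
  obtain ⟨j₁, hj1, hj2⟩ := (ev1.and ev2).exists
  set m := mj j₁ with hmdef
  have ev3 : ∀ᶠ k in atTop, c - ε < a (nj k) :=
    h2.eventually (lt_mem_nhds (by linarith : c - ε < c))
  have ev4 : ∀ᶠ k in atTop, m ≤ nj k := hnjtop.eventually_ge_atTop _
  obtain ⟨k₁, hk1, hk2⟩ := (ev3.and ev4).exists
  obtain ⟨h, hmh, hhabs⟩ := discrete_ivt a t ε m (nj k₁) hk2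
    (by linarith) (by linarith)
    (fun i hi => hstep i (le_trans (le_trans (le_max_right _ _) hj2) hi))
  refine ⟨h, ?_, ?_⟩
  · have : K + 1 ≤ m := le_trans (le_max_left _ _) hj2
    omega
  · simpa [ha, htdef, hc] using hhabs
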